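/- Let E be a real Banach lattice with a 1-unconditional basis (e_i), let n ≥ 1 and m ≥ 1 be integers, and let b : {1, …, m}ⁿ → ℝ be any family of coefficients. Then sup{ |∑_{i=1}^m b(i, …, i) x*₁(e_i) ⋯ x*ₙ(e_i)| : x*₁, …, x*ₙ ∈ B_{E*} } ≤ sup{ |∑_{(i₁, …, iₙ) ∈ {1, …, m}ⁿ} b(i₁, …, iₙ) x*₁(e_{i₁}) ⋯ x*ₙ(e_{iₙ})| : x*₁, …, x*ₙ ∈ B_{E*} }. Equivalently, the diagonal projection Q on the n-fold injective tensor product of E, determined by Q(e_{i₁} ⊗ ⋯ ⊗ e_{iₙ}) = e_{i₁} ⊗ ⋯ ⊗ e_{iₙ} if i₁ = ⋯ = iₙ and Q(e_{i₁} ⊗ ⋯ ⊗ e_{iₙ}) = 0 otherwise, satisfies ‖Q u‖_ε ≤ ‖u‖_ε on finite linear combinations of basis tensors. -/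

import Mathlib

open scoped BigOperators

lemma signOp_exists {E : Type*} [NormedAddCommGroup E] [NormedSpace ℝ E] [CompleteSpace E]
    (e : ℕ → E) (f : ℕ → E →L[ℝ] ℝ)
    (hBi : ∀ i j : ℕ, f i (e j) = if i = j then 1 else 0)
    (hExp : ∀ x : E, HasSum (fun i => f i x • e i) x)
    (hUnc : ∀ (a θ : ℕ → ℝ), (∀ i, θ i = 1 ∨ θ i = -1) →
      ∀ s : Finset ℕ, ‖∑ i ∈ s, (θ i * a i) • e i‖ = ‖∑ i ∈ s, a i • e i‖)
    (θ : ℕ → ℝ) (hθ : ∀ i, θ i = 1 ∨ θ i = -1) :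
    ∃ S : E →L[ℝ] E, ‖S‖ ≤ 1 ∧ ∀ i, S (e i) = θ i • e i := by
  -- summability of the signed expansion
  have hsum : ∀ x : E, Summable (fun i => (θ i * f i x) • e i) := by
    intro x
    rw [summable_iff_vanishing_norm]
    intro ε hε
    obtain ⟨s, hs⟩ := summable_iff_vanishing_norm.mp (hExp x).summable ε hε
    refine ⟨s, fun t ht => ?_⟩
    rw [hUnc (fun i => f i x) θ hθ t]
    exact hs t ht
  have hnorm : ∀ x : E, ‖∑' i, (θ i * f i x) • e i‖ = ‖x‖ := by
    intro x
    have h1 : Filter.Tendsto (fun s : Finset ℕ => ‖∑ i ∈ s, (θ i * f i x) • e i‖)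
        Filter.atTop (nhds ‖∑' i, (θ i * f i x) • e i‖) :=
      ((hsum x).hasSum.norm : _)
    have h2 : Filter.Tendsto (fun s : Finset ℕ => ‖∑ i ∈ s, (θ i * f i x) • e i‖)
        Filter.atTop (nhds ‖x‖) := by
      have := (hExp x).norm
      convert this using 2 with s
      exact hUnc (fun i => f i x) θ hθ s
      rfl
    exact tendsto_nhds_unique h1 h2
  -- build the linear map
  refine ⟨LinearMap.mkContinuous
    { toFun := fun x => ∑' i, (θ i * f i x) • e i
      map_add' := ?_
      map_smul' := ?_ } 1 ?_, ?_, ?_⟩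
  · intro x y
    have : (fun i => (θ i * f i (x + y)) • e i)
        = fun i => (θ i * f i x) • e i + (θ i * f i y) • e i := by
      funext i
      rw [map_add]
      rw [← add_smul]
      ring_nf
    rw [this]
    exact Summable.tsum_add (hsum x) (hsum y)
  · intro c x
    simp only [RingHom.id_apply]
    have : (fun i => (θ i * f i (c • x)) • e i)
        = fun i => c • ((θ i * f i x) • e i) := by
      funext i
      rw [map_smul, smul_eq_mul, smul_smul]
      ring_nf
    show (∑' i, (θ i * f i (c • x)) • e i) = c • ∑' i, (θ i * f i x) • e i
    rw [this]
    exact ((hsum x).hasSum.const_smul c).tsum_eq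
  · intro x
    rw [one_mul]
    exact le_of_eq (hnorm x)
  · apply ContinuousLinearMap.opNorm_le_bound _ zero_le_one
    intro x
    rw [one_mul]
    exact le_of_eq (hnorm x)
  · intro i
    simp only [LinearMap.mkContinuous_apply, LinearMap.coe_mk, AddHom.coe_mk]
    rw [tsum_eq_single i]
    · rw [hBi i i, if_pos rfl, mul_one]
    · intro k hk
      rw [hBi k i, if_neg hk, mul_zero, zero_smul]

set_option maxHeartbeats 1000000

/-- real sign of a boolean -/
noncomputable def sg (x : Bool) : ℝ := if x then 1 else -1

lemma sum_sgn_mul (m : ℕ) (a c : Fin m) :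
    ∑ τ : Fin m → Bool, sg (τ a) * sg (τ c) = if a = c then 2 ^ m else 0 := by
  classical
  have key : ∀ τ : Fin m → Bool, sg (τ a) * sg (τ c)
      = ∏ i : Fin m, ((if i = a then sg (τ i) else 1) * (if i = c then sg (τ i) else 1)) := by
    intro τ
    rw [Finset.prod_mul_distrib, Finset.prod_ite_eq', Finset.prod_ite_eq']
    simp
  calc ∑ τ : Fin m → Bool, sg (τ a) * sg (τ c)
      = ∑ τ ∈ Fintype.piFinset (fun _ : Fin m => (Finset.univ : Finset Bool)),
        ∏ i : Fin m, ((if i = a then sg (τ i) else 1) * (if i = c then sg (τ i) else 1)) := by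
        rw [Fintype.piFinset_univ]
        exact Finset.sum_congr rfl fun τ _ => key τ
    _ = ∏ i : Fin m, ∑ x : Bool, ((if i = a then sg x else 1) * (if i = c then sg x else 1)) :=
        (Finset.prod_univ_sum (fun _ : Fin m => (Finset.univ : Finset Bool))
          (fun i x => (if i = a then sg x else 1) * (if i = c then sg x else 1))).symm
    _ = if a = c then 2 ^ m else 0 := by
        by_cases hac : a = c
        · subst hac
          rw [if_pos rfl]
          have : ∀ i : Fin m,
              (∑ x : Bool, ((if i = a then sg x else 1) * (if i = a then sg x else 1))) = 2 := by
            intro i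
            by_cases hi : i = a <;> simp [hi, sg, Fintype.sum_bool] <;> norm_num
          rw [Finset.prod_congr rfl fun i _ => this i, Finset.prod_const, Finset.card_univ,
            Fintype.card_fin]
        · rw [if_neg hac]
          apply Finset.prod_eq_zero (Finset.mem_univ a)
          simp [hac, sg, Fintype.sum_bool]

/-- the sign pattern for coordinate `j` built from `σ` -/
noncomputable def th (m n' : ℕ) (σ : Fin n' → Fin m → Bool) (j : Fin (n' + 1)) (i : ℕ) : ℝ :=
  ∏ k : Fin n', if j = k.castSucc ∨ j = Fin.last n'
    then (if h : i < m then sg (σ k ⟨i, h⟩) else 1) else 1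

lemma th_sign (m n' : ℕ) (σ : Fin n' → Fin m → Bool) (j : Fin (n' + 1)) (i : ℕ) :
    th m n' σ j i = 1 ∨ th m n' σ j i = -1 := by
  apply Finset.prod_induction _ (fun x : ℝ => x = 1 ∨ x = -1)
  · rintro x y (rfl | rfl) (rfl | rfl) <;> norm_num
  · left; rfl
  · intro k _
    by_cases h1 : j = k.castSucc ∨ j = Fin.last n'
    · rw [if_pos h1]
      by_cases h2 : i < m
      · rw [dif_pos h2]; cases σ k ⟨i, h2⟩ <;> simp [sg]
      · rw [dif_neg h2]; left; rfl
    · rw [if_neg h1]; left; rfl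

lemma th_castSucc (m n' : ℕ) (σ : Fin n' → Fin m → Bool) (k₀ : Fin n') (i : Fin m) :
    th m n' σ k₀.castSucc (i : ℕ) = sg (σ k₀ i) := by
  unfold th
  have : ∀ k : Fin n', (if k₀.castSucc = k.castSucc ∨ k₀.castSucc = Fin.last n'
      then (if h : (i : ℕ) < m then sg (σ k ⟨i, h⟩) else 1) else 1)
      = if k = k₀ then sg (σ k i) else 1 := by
    intro k
    have hne : k₀.castSucc ≠ Fin.last n' := (Fin.castSucc_lt_last k₀).ne
    by_cases hk : k = k₀
    · subst hk
      rw [if_pos (Or.inl rfl), if_pos rfl, dif_pos i.isLt]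
    · rw [if_neg, if_neg hk]
      rintro (h | h)
      · exact hk (Fin.castSucc_injective _ h).symm
      · exact hne h
  rw [Finset.prod_congr rfl fun k _ => this k, Finset.prod_ite_eq']
  simp

lemma th_last (m n' : ℕ) (σ : Fin n' → Fin m → Bool) (i : Fin m) :
    th m n' σ (Fin.last n') (i : ℕ) = ∏ k : Fin n', sg (σ k i) := by
  unfold th
  apply Finset.prod_congr rfl
  intro k _
  rw [if_pos (Or.inr rfl), dif_pos i.isLt]

lemma th_avg (m n' : ℕ) (ι : Fin (n' + 1) → Fin m) :
    ∑ σ : Fin n' → Fin m → Bool, ∏ j : Fin (n' + 1), th m n' σ j (ι j)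
      = if (∀ j, ι j = ι (Fin.last n')) then (2 : ℝ) ^ (n' * m) else 0 := by
  classical
  have step1 : ∀ σ : Fin n' → Fin m → Bool,
      ∏ j : Fin (n' + 1), th m n' σ j (ι j)
        = ∏ k : Fin n', (sg (σ k (ι k.castSucc)) * sg (σ k (ι (Fin.last n')))) := by
    intro σ
    rw [Fin.prod_univ_castSucc, th_last,
      Finset.prod_congr rfl fun (k : Fin n') _ => th_castSucc m n' σ k (ι k.castSucc),
      ← Finset.prod_mul_distrib]
  calc ∑ σ : Fin n' → Fin m → Bool, ∏ j : Fin (n' + 1), th m n' σ j (ι j)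
      = ∑ σ ∈ Fintype.piFinset (fun _ : Fin n' => (Finset.univ : Finset (Fin m → Bool))),
        ∏ k : Fin n', (sg (σ k (ι k.castSucc)) * sg (σ k (ι (Fin.last n')))) := by
        rw [Fintype.piFinset_univ]
        exact Finset.sum_congr rfl fun σ _ => step1 σ
    _ = ∏ k : Fin n', ∑ τ : Fin m → Bool, sg (τ (ι k.castSucc)) * sg (τ (ι (Fin.last n'))) :=
        (Finset.prod_univ_sum (fun _ : Fin n' => (Finset.univ : Finset (Fin m → Bool)))
          (fun k τ => sg (τ (ι k.castSucc)) * sg (τ (ι (Fin.last n'))))).symm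
    _ = ∏ k : Fin n', (if ι k.castSucc = ι (Fin.last n') then (2 : ℝ) ^ m else 0) :=
        Finset.prod_congr rfl fun k _ => sum_sgn_mul m _ _
    _ = if (∀ j, ι j = ι (Fin.last n')) then (2 : ℝ) ^ (n' * m) else 0 := by
        by_cases hδ : ∀ j, ι j = ι (Fin.last n')
        · rw [if_pos hδ]
          rw [Finset.prod_congr rfl fun k _ => if_pos (hδ k.castSucc), Finset.prod_const,
            Finset.card_univ, Fintype.card_fin, ← pow_mul, Nat.mul_comm]
        · rw [if_neg hδ]
          have : ∃ k : Fin n', ι k.castSucc ≠ ι (Fin.last n') := by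
            by_contra h
            push_neg at h
            exact hδ (fun j => Fin.lastCases rfl h j)
          obtain ⟨k, hk⟩ := this
          exact Finset.prod_eq_zero (Finset.mem_univ k) (if_neg hk)

open scoped BigOperators

/-- Part of Lemma 3.1: for a Banach lattice `E` with a 1-unconditional basis `(eᵢ)`, the
injective tensor norm of the diagonal part of a finite tensor
`∑ b(i₁, …, iₙ) e_{i₁} ⊗ ⋯ ⊗ e_{iₙ}` is at most the injective tensor norm of the whole
tensor; i.e. the diagonal projection `Q` on `⊗̌_{n,ε} E` is contractive. -/
theorem stmt_5
    (E : Type*) [NormedAddCommGroup E] [Lattice E] [HasSolidNorm E] [IsOrderedAddMonoid E] [NormedSpace ℝ E] [CompleteSpace E]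
    (e : ℕ → E) (f : ℕ → E →L[ℝ] ℝ)
    (hBi : ∀ i j : ℕ, f i (e j) = if i = j then 1 else 0)
    (hExp : ∀ x : E, HasSum (fun i => f i x • e i) x)
    (hUnc : ∀ (a θ : ℕ → ℝ), (∀ i, θ i = 1 ∨ θ i = -1) →
      ∀ s : Finset ℕ, ‖∑ i ∈ s, (θ i * a i) • e i‖ = ‖∑ i ∈ s, a i • e i‖)
    (hPos : ∀ x : E, 0 ≤ x ↔ ∀ i, 0 ≤ f i x)
    (n m : ℕ) (hn : 1 ≤ n) (hm : 1 ≤ m)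
    (b : (Fin n → Fin m) → ℝ) :
    sSup {r : ℝ | ∃ φ : Fin n → E →L[ℝ] ℝ, (∀ j, ‖φ j‖ ≤ 1) ∧
        r = |∑ i : Fin m, b (fun _ => i) * ∏ j : Fin n, (φ j) (e i)|}
      ≤ sSup {r : ℝ | ∃ φ : Fin n → E →L[ℝ] ℝ, (∀ j, ‖φ j‖ ≤ 1) ∧
        r = |∑ ι : Fin n → Fin m, b ι * ∏ j : Fin n, (φ j) (e (ι j))|} := by
  classical
  obtain ⟨n', rfl⟩ : ∃ n', n = n' + 1 := ⟨n - 1, (Nat.succ_pred_eq_of_pos hn).symm⟩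
  set RHS := {r : ℝ | ∃ φ : Fin (n' + 1) → E →L[ℝ] ℝ, (∀ j, ‖φ j‖ ≤ 1) ∧
      r = |∑ ι : Fin (n' + 1) → Fin m, b ι * ∏ j : Fin (n' + 1), (φ j) (e (ι j))|} with hRHS
  have hBdd : BddAbove RHS := by
    refine ⟨∑ ι : Fin (n' + 1) → Fin m, |b ι| * ∏ j : Fin (n' + 1), ‖e (ι j)‖, ?_⟩
    rintro r ⟨φ, hφ, rfl⟩
    calc |∑ ι : Fin (n' + 1) → Fin m, b ι * ∏ j : Fin (n' + 1), (φ j) (e (ι j))|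
        ≤ ∑ ι : Fin (n' + 1) → Fin m, |b ι * ∏ j : Fin (n' + 1), (φ j) (e (ι j))| :=
          Finset.abs_sum_le_sum_abs _ _
      _ ≤ ∑ ι : Fin (n' + 1) → Fin m, |b ι| * ∏ j : Fin (n' + 1), ‖e (ι j)‖ := by
          refine Finset.sum_le_sum fun ι _ => ?_
          rw [abs_mul]
          refine mul_le_mul_of_nonneg_left ?_ (abs_nonneg _)
          rw [Finset.abs_prod]
          refine Finset.prod_le_prod (fun j _ => abs_nonneg _) (fun j _ => ?_)
          have h1 : ‖(φ j) (e (ι j))‖ ≤ ‖φ j‖ * ‖e (ι j)‖ := (φ j).le_opNorm _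
          rw [Real.norm_eq_abs] at h1
          calc |(φ j) (e (ι j))| ≤ ‖φ j‖ * ‖e (ι j)‖ := h1
            _ ≤ 1 * ‖e (ι j)‖ := mul_le_mul_of_nonneg_right (hφ j) (norm_nonneg _)
            _ = ‖e (ι j)‖ := one_mul _
  apply csSup_le
  · exact ⟨_, fun _ => 0, fun j => by simp, rfl⟩
  · rintro r ⟨φ, hφ, rfl⟩
    have hSex : ∀ (σ : Fin n' → Fin m → Bool) (j : Fin (n' + 1)),
        ∃ S : E →L[ℝ] E, ‖S‖ ≤ 1 ∧ ∀ i, S (e i) = th m n' σ j i • e i :=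
      fun σ j => signOp_exists e f hBi hExp hUnc _ (th_sign m n' σ j)
    choose S hS1 hS2 using hSex
    set ψ : (Fin n' → Fin m → Bool) → Fin (n' + 1) → (E →L[ℝ] ℝ) :=
      fun σ j => (φ j).comp (S σ j) with hψ
    have hψnorm : ∀ σ j, ‖ψ σ j‖ ≤ 1 := by
      intro σ j
      refine le_trans (ContinuousLinearMap.opNorm_comp_le _ _) ?_
      nlinarith [hφ j, hS1 σ j, norm_nonneg (φ j), norm_nonneg (S σ j)]
    have hψval : ∀ σ j (i : ℕ), ψ σ j (e i) = th m n' σ j i * φ j (e i) := by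
      intro σ j i
      rw [hψ]
      simp only [ContinuousLinearMap.comp_apply]
      rw [hS2 σ j i, map_smul, smul_eq_mul]
    have hle : ∀ σ : Fin n' → Fin m → Bool,
        |∑ ι : Fin (n' + 1) → Fin m, b ι * ∏ j : Fin (n' + 1), (ψ σ j) (e (ι j))| ≤ sSup RHS :=
      fun σ => le_csSup hBdd ⟨ψ σ, fun j => hψnorm σ j, rfl⟩
    -- key averaging identity
    have diag : ∑ ι : Fin (n' + 1) → Fin m,
          (if ∀ j, ι j = ι (Fin.last n') then b ι * ∏ j : Fin (n' + 1), φ j (e (ι j)) else 0)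
        = ∑ i : Fin m, b (fun _ => i) * ∏ j : Fin (n' + 1), φ j (e i) := by
      have himg : ∀ ι : Fin (n' + 1) → Fin m,
          ι ∉ Finset.image (fun i : Fin m => (fun _ => i : Fin (n' + 1) → Fin m)) Finset.univ →
          (if ∀ j, ι j = ι (Fin.last n') then b ι * ∏ j : Fin (n' + 1), φ j (e (ι j)) else 0)
            = 0 := by
        intro ι hι
        rw [if_neg]
        intro h
        refine hι (Finset.mem_image.mpr ⟨ι (Fin.last n'), Finset.mem_univ _, ?_⟩)
        funext j; exact (h j).symm
      rw [← Finset.sum_subset (Finset.subset_univ _) (fun ι _ hι => himg ι hι),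
        Finset.sum_image (fun x _ y _ hxy => congrFun hxy (Fin.last n'))]
      exact Finset.sum_congr rfl fun i _ => if_pos (fun j => rfl)
    have key : ∑ σ : Fin n' → Fin m → Bool,
          ∑ ι : Fin (n' + 1) → Fin m, b ι * ∏ j : Fin (n' + 1), (ψ σ j) (e (ι j))
        = 2 ^ (n' * m) * ∑ i : Fin m, b (fun _ => i) * ∏ j : Fin (n' + 1), φ j (e i) := by
      calc ∑ σ : Fin n' → Fin m → Bool,
            ∑ ι : Fin (n' + 1) → Fin m, b ι * ∏ j : Fin (n' + 1), (ψ σ j) (e (ι j))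
          = ∑ σ : Fin n' → Fin m → Bool, ∑ ι : Fin (n' + 1) → Fin m,
              b ι * ((∏ j : Fin (n' + 1), th m n' σ j (ι j)) *
                ∏ j : Fin (n' + 1), φ j (e (ι j))) := by
            refine Finset.sum_congr rfl fun σ _ => Finset.sum_congr rfl fun ι _ => ?_
            rw [← Finset.prod_mul_distrib]
            congr 1
            exact Finset.prod_congr rfl fun j _ => hψval σ j (ι j)
        _ = ∑ ι : Fin (n' + 1) → Fin m,
              (∑ σ : Fin n' → Fin m → Bool, ∏ j : Fin (n' + 1), th m n' σ j (ι j)) *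
                (b ι * ∏ j : Fin (n' + 1), φ j (e (ι j))) := by
            rw [Finset.sum_comm]
            refine Finset.sum_congr rfl fun ι _ => ?_
            rw [Finset.sum_mul]
            exact Finset.sum_congr rfl fun σ _ => by ring
        _ = ∑ ι : Fin (n' + 1) → Fin m,
              (if ∀ j, ι j = ι (Fin.last n') then (2 : ℝ) ^ (n' * m) else 0) *
                (b ι * ∏ j : Fin (n' + 1), φ j (e (ι j))) := by
            exact Finset.sum_congr rfl fun ι _ => by rw [th_avg]
        _ = 2 ^ (n' * m) * ∑ ι : Fin (n' + 1) → Fin m,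
              (if ∀ j, ι j = ι (Fin.last n') then b ι * ∏ j : Fin (n' + 1), φ j (e (ι j))
                else 0) := by
            rw [Finset.mul_sum]
            refine Finset.sum_congr rfl fun ι _ => ?_
            split_ifs <;> ring
        _ = 2 ^ (n' * m) * ∑ i : Fin m, b (fun _ => i) * ∏ j : Fin (n' + 1), φ j (e i) := by
            rw [diag]
    -- conclude
    have hcard : ((Fintype.card (Fin n' → Fin m → Bool) : ℕ) : ℝ) = 2 ^ (n' * m) := by
      rw [Fintype.card_fun, Fintype.card_fun, Fintype.card_bool, Fintype.card_fin,
        Fintype.card_fin, ← pow_mul, Nat.mul_comm]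
      push_cast
      ring
    have hmain : (2 : ℝ) ^ (n' * m) *
        |∑ i : Fin m, b (fun _ => i) * ∏ j : Fin (n' + 1), φ j (e i)|
        ≤ (2 : ℝ) ^ (n' * m) * sSup RHS := by
      calc (2 : ℝ) ^ (n' * m) * |∑ i : Fin m, b (fun _ => i) * ∏ j : Fin (n' + 1), φ j (e i)|
          = |∑ σ : Fin n' → Fin m → Bool,
              ∑ ι : Fin (n' + 1) → Fin m, b ι * ∏ j : Fin (n' + 1), (ψ σ j) (e (ι j))| := by
            rw [key, abs_mul, abs_pow, abs_two]
        _ ≤ ∑ σ : Fin n' → Fin m → Bool,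
              |∑ ι : Fin (n' + 1) → Fin m, b ι * ∏ j : Fin (n' + 1), (ψ σ j) (e (ι j))| :=
            Finset.abs_sum_le_sum_abs _ _
        _ ≤ ∑ _σ : Fin n' → Fin m → Bool, sSup RHS := Finset.sum_le_sum fun σ _ => hle σ
        _ = (2 : ℝ) ^ (n' * m) * sSup RHS := by
            rw [Finset.sum_const, Finset.card_univ, nsmul_eq_mul, hcard]
    exact le_of_mul_le_mul_left hmain (by positivity)
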